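/- arXiv:0704.3058 — 2 statements merged into one kernel-verified Lean document; each statement's English description precedes it below -/
import Mathlib

section
/- Let m ≤ n be positive integers and k a positive integer. Let X_1, …, X_k be pairwise disjoint subsets of [m] = {1, …, m} and Y_1, …, Y_k pairwise disjoint subsets of [n] = {1, …, n} with |X_i| = |Y_i| for all i = 1, …, k. Then the number of injective functions f : [m] → [n] such that the image set f(X_i) is not equal to Y_i for every i = 1, …, k equals ∑_{I ⊆ [k]} (−1)^{|I|} · (n − |⋃_{i∈I} X_i|)^{(m − |⋃_{i∈I} X_i|)} · ∏_{i∈I} |X_i|!, where the sum runs over all subsets I of {1, …, k}. -/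
open Finset

lemma aux_single {m n : ℕ} [NeZero n] (A : Finset (Fin m)) (B : Finset (Fin n))
    (hAB : A.card = B.card) :
    (univ.filter (fun g : Fin m → Fin n => A.image g = B ∧ ∀ x ∉ A, g x = 0)).card
      = (A.card).factorial := by
  have hne : Nonempty (↥A ≃ ↥B) :=
    ⟨Fintype.equivOfCardEq (by simp [Fintype.card_coe, hAB])⟩
  have key : (univ.filter (fun g : Fin m → Fin n => A.image g = B ∧ ∀ x ∉ A, g x = 0)).card
      = (univ : Finset (↥A ≃ ↥B)).card := by
    refine Finset.card_bij'
      (i := fun g hg => ?_) (j := fun e _ => fun x => if hx : x ∈ A then (e ⟨x, hx⟩ : Fin n) else 0)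
      ?_ ?_ ?_ ?_
    · -- construct the equiv from g
      simp only [mem_filter, mem_univ, true_and] at hg
      refine Equiv.ofBijective (fun x : ↥A => (⟨g x, by
        rw [← hg.1]; exact Finset.mem_image_of_mem g x.2⟩ : ↥B)) ?_
      refine (Fintype.bijective_iff_injective_and_card _).mpr ⟨?_, by simp [Fintype.card_coe, hAB]⟩
      intro a b hab
      have hinj : Set.InjOn g ↑A := Finset.injOn_of_card_image_eq (by rw [hg.1, hAB])
      exact Subtype.ext (hinj a.2 b.2 (congrArg Subtype.val hab))
    · intro g hg; exact mem_univ _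
    · intro e _
      simp only [mem_filter, mem_univ, true_and]
      constructor
      · ext y
        simp only [Finset.mem_image]
        constructor
        · rintro ⟨x, hx, rfl⟩
          rw [dif_pos hx]
          exact (e ⟨x, hx⟩).2
        · intro hy
          refine ⟨(e.symm ⟨y, hy⟩ : Fin m), (e.symm ⟨y, hy⟩).2, ?_⟩
          rw [dif_pos (e.symm ⟨y, hy⟩).2]
          simp
      · intro x hx; rw [dif_neg hx]
    · intro g hg
      simp only [mem_filter, mem_univ, true_and] at hg
      funext x
      by_cases hx : x ∈ A
      · simp only [dif_pos hx, Equiv.ofBijective_apply]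
      · simp only [dif_neg hx, hg.2 x hx]
    · intro e _
      ext x
      simp only [Equiv.ofBijective_apply, dif_pos x.2, Subtype.coe_eta]
  rw [key, Finset.card_univ, Fintype.card_equiv hne.some, Fintype.card_coe]

lemma aux_compl {m n : ℕ} [NeZero n] (U : Finset (Fin m)) (V : Finset (Fin n))
    (hUV : U.card = V.card) :
    (univ.filter (fun h : Fin m → Fin n =>
        (∀ x ∉ U, ∀ y ∉ U, h x = h y → x = y) ∧ (∀ x ∉ U, h x ∉ V) ∧ ∀ x ∈ U, h x = 0)).card
      = (n - U.card).descFactorial (m - U.card) := by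
  have key : (univ.filter (fun h : Fin m → Fin n =>
        (∀ x ∉ U, ∀ y ∉ U, h x = h y → x = y) ∧ (∀ x ∉ U, h x ∉ V) ∧ ∀ x ∈ U, h x = 0)).card
      = (univ : Finset ({x : Fin m // x ∉ U} ↪ {y : Fin n // y ∉ V})).card := by
    refine Finset.card_bij'
      (i := fun h hh => ?_)
      (j := fun e _ => fun x => if hx : x ∈ U then 0 else (e ⟨x, hx⟩ : Fin n))
      ?_ ?_ ?_ ?_
    · simp only [mem_filter, mem_univ, true_and] at hh
      exact ⟨fun x => ⟨h x.1, hh.2.1 x.1 x.2⟩,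
        fun a b hab => Subtype.ext (hh.1 a.1 a.2 b.1 b.2 (congrArg Subtype.val hab))⟩
    · intro h hh; exact mem_univ _
    · intro e _
      simp only [mem_filter, mem_univ, true_and]
      refine ⟨?_, ?_, ?_⟩
      · intro x hx y hy hxy
        rw [dif_neg hx, dif_neg hy] at hxy
        exact congrArg Subtype.val (e.injective (Subtype.ext hxy))
      · intro x hx
        rw [dif_neg hx]
        exact (e ⟨x, hx⟩).2
      · intro x hx; rw [dif_pos hx]
    · intro h hh
      simp only [mem_filter, mem_univ, true_and] at hh
      funext x
      by_cases hx : x ∈ U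
      · simp only [dif_pos hx, hh.2.2 x hx]
      · simp only [dif_neg hx, Function.Embedding.coeFn_mk]
        rfl
    · intro e _
      ext x
      simp only [Function.Embedding.coeFn_mk, dif_neg x.2]
      exact congrArg (fun y : Fin n => (y : ℕ)) (dif_neg x.2 : (if hx : (x : Fin m) ∈ U then (0 : Fin n) else ((e ⟨x, hx⟩ : {y // y ∉ V}) : Fin n)) = (e x : Fin n))
  rw [key, Finset.card_univ, Fintype.card_embedding_eq]
  congr 1
  · rw [Fintype.card_subtype_compl, Fintype.card_fin, Fintype.card_coe, hUV]
  · rw [Fintype.card_subtype_compl, Fintype.card_fin, Fintype.card_coe]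

lemma aux_blocks {m n k : ℕ} [NeZero n] (X : Fin k → Finset (Fin m)) (Y : Fin k → Finset (Fin n))
    (hX : ∀ i j, i ≠ j → Disjoint (X i) (X j))
    (hcard : ∀ i, (X i).card = (Y i).card) (I : Finset (Fin k)) :
    (univ.filter (fun g : Fin m → Fin n =>
        (∀ i ∈ I, (X i).image g = Y i) ∧ ∀ x ∉ I.biUnion X, g x = 0)).card
      = ∏ i ∈ I, ((X i).card).factorial := by
  induction I using Finset.induction_on with
  | empty =>
    have : (univ.filter (fun g : Fin m → Fin n =>
        (∀ i ∈ (∅ : Finset (Fin k)), (X i).image g = Y i) ∧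
          ∀ x ∉ (∅ : Finset (Fin k)).biUnion X, g x = 0))
        = {fun _ => (0 : Fin n)} := by
      ext g
      simp [funext_iff]
    rw [this, card_singleton, Finset.prod_empty]
  | @insert j I hjI ih =>
    -- x ∈ X j → x ∉ I.biUnion X
    have hdisj : ∀ x ∈ X j, x ∉ I.biUnion X := by
      intro x hx hmem
      obtain ⟨i, hi, hxi⟩ := Finset.mem_biUnion.mp hmem
      exact (Finset.disjoint_left.mp (hX j i (fun h => hjI (h ▸ hi))) hx) hxi
    have key : (univ.filter (fun g : Fin m → Fin n =>
        (∀ i ∈ insert j I, (X i).image g = Y i) ∧ ∀ x ∉ (insert j I).biUnion X, g x = 0)).card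
      = ((univ.filter (fun g : Fin m → Fin n => (X j).image g = Y j ∧ ∀ x ∉ X j, g x = 0)) ×ˢ
         (univ.filter (fun g : Fin m → Fin n =>
            (∀ i ∈ I, (X i).image g = Y i) ∧ ∀ x ∉ I.biUnion X, g x = 0))).card := by
      refine Finset.card_nbij'
        (i := fun g => (fun x => if x ∈ X j then g x else 0,
                        fun x => if x ∈ I.biUnion X then g x else 0))
        (j := fun p => fun x => if x ∈ X j then p.1 x else p.2 x) ?_ ?_ ?_ ?_
      · intro g hg
        simp only [Finset.mem_coe, mem_filter, mem_univ, true_and] at hg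
        simp only [Finset.mem_coe, Finset.mem_product, mem_filter, mem_univ, true_and]
        refine ⟨⟨?_, fun x hx => if_neg hx⟩, ⟨?_, fun x hx => if_neg hx⟩⟩
        · rw [show Finset.image (fun x => if x ∈ X j then g x else 0) (X j)
              = Finset.image g (X j) from Finset.image_congr fun x hx => if_pos hx]
          exact hg.1 j (mem_insert_self j I)
        · intro i hi
          rw [show Finset.image (fun x => if x ∈ I.biUnion X then g x else 0) (X i)
              = Finset.image g (X i) from
              Finset.image_congr fun x hx => if_pos (mem_biUnion.mpr ⟨i, hi, hx⟩)]
          exact hg.1 i (mem_insert_of_mem hi)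
      · intro p hp
        simp only [Finset.mem_coe, Finset.mem_product, mem_filter, mem_univ, true_and] at hp
        simp only [Finset.mem_coe, mem_filter, mem_univ, true_and]
        constructor
        · intro i hi
          rcases Finset.mem_insert.mp hi with rfl | hi
          · rw [show Finset.image (fun x => if x ∈ X i then p.1 x else p.2 x) (X i)
                = Finset.image p.1 (X i) from Finset.image_congr fun x hx => if_pos hx]
            exact hp.1.1
          · rw [show Finset.image (fun x => if x ∈ X j then p.1 x else p.2 x) (X i)
                = Finset.image p.2 (X i) from Finset.image_congr fun x hx =>
                  if_neg fun hxj => hdisj x hxj (mem_biUnion.mpr ⟨i, hi, hx⟩)]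
            exact hp.2.1 i hi
        · intro x hx
          rw [Finset.biUnion_insert] at hx
          have hx1 : x ∉ X j := fun h => hx (Finset.mem_union_left _ h)
          have hx2 : x ∉ I.biUnion X := fun h => hx (Finset.mem_union_right _ h)
          simp only [if_neg hx1]
          exact hp.2.2 x hx2
      · intro g hg
        simp only [Finset.mem_coe, mem_filter, mem_univ, true_and] at hg
        funext x
        by_cases hx : x ∈ X j
        · simp only [if_pos hx]
        · simp only [if_neg hx]
          by_cases hx2 : x ∈ I.biUnion X
          · simp only [if_pos hx2]
          · simp only [if_neg hx2]
            refine (hg.2 x ?_).symm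
            rw [Finset.biUnion_insert]
            exact fun h => (Finset.mem_union.mp h).elim hx hx2
      · intro p hp
        simp only [Finset.mem_coe, Finset.mem_product, mem_filter, mem_univ, true_and] at hp
        refine Prod.ext ?_ ?_
        · funext x
          by_cases hx : x ∈ X j
          · simp only [if_pos hx]
          · simp only [if_neg hx]
            exact (hp.1.2 x hx).symm
        · funext x
          by_cases hx : x ∈ I.biUnion X
          · simp only [if_pos hx, if_neg (fun h => hdisj x h hx)]
          · simp only [if_neg hx]
            exact (hp.2.2 x hx).symm
    rw [key, Finset.card_product, aux_single (X j) (Y j) (hcard j), ih,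
      Finset.prod_insert hjI]

lemma aux_N {m n k : ℕ} [NeZero n] (X : Fin k → Finset (Fin m)) (Y : Fin k → Finset (Fin n))
    (hX : ∀ i j, i ≠ j → Disjoint (X i) (X j))
    (hY : ∀ i j, i ≠ j → Disjoint (Y i) (Y j))
    (hcard : ∀ i, (X i).card = (Y i).card) (I : Finset (Fin k)) :
    (univ.filter (fun f : Fin m → Fin n =>
        Function.Injective f ∧ ∀ i ∈ I, (X i).image f = Y i)).card
      = (n - (I.biUnion X).card).descFactorial (m - (I.biUnion X).card) *
          ∏ i ∈ I, ((X i).card).factorial := by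
  set U := I.biUnion X with hU
  set V := I.biUnion Y with hV
  have hUV : U.card = V.card := by
    rw [hU, hV, Finset.card_biUnion (fun i _ j _ hij => hX i j hij),
      Finset.card_biUnion (fun i _ j _ hij => hY i j hij)]
    exact Finset.sum_congr rfl fun i _ => hcard i
  have key : (univ.filter (fun f : Fin m → Fin n =>
        Function.Injective f ∧ ∀ i ∈ I, (X i).image f = Y i)).card
      = ((univ.filter (fun h : Fin m → Fin n =>
          (∀ x ∉ U, ∀ y ∉ U, h x = h y → x = y) ∧ (∀ x ∉ U, h x ∉ V) ∧ ∀ x ∈ U, h x = 0)) ×ˢ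
         (univ.filter (fun g : Fin m → Fin n =>
          (∀ i ∈ I, (X i).image g = Y i) ∧ ∀ x ∉ U, g x = 0))).card := by
    refine Finset.card_nbij'
      (i := fun f => (fun x => if x ∈ U then 0 else f x, fun x => if x ∈ U then f x else 0))
      (j := fun p => fun x => if x ∈ U then p.2 x else p.1 x) ?_ ?_ ?_ ?_
    · intro f hf
      simp only [Finset.mem_coe, mem_filter, mem_univ, true_and] at hf
      obtain ⟨hinj, hblk⟩ := hf
      simp only [Finset.mem_coe, Finset.mem_product, mem_filter, mem_univ, true_and]
      refine ⟨⟨?_, ?_, fun x hx => if_pos hx⟩, ?_, fun x hx => if_neg hx⟩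
      · intro x hx y hy hxy
        simp only [if_neg hx, if_neg hy] at hxy
        exact hinj hxy
      · intro x hx
        rw [if_neg hx]
        intro hfx
        obtain ⟨i, hi, hfxi⟩ := Finset.mem_biUnion.mp hfx
        rw [← hblk i hi] at hfxi
        obtain ⟨x', hx', hfx'⟩ := Finset.mem_image.mp hfxi
        exact hx (hinj hfx' ▸ Finset.mem_biUnion.mpr ⟨i, hi, hx'⟩)
      · intro i hi
        rw [show Finset.image (fun x => if x ∈ U then f x else 0) (X i)
            = Finset.image f (X i) from Finset.image_congr fun x hx =>
              if_pos (Finset.mem_biUnion.mpr ⟨i, hi, hx⟩)]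
        exact hblk i hi
    · intro p hp
      simp only [Finset.mem_coe, Finset.mem_product, mem_filter, mem_univ, true_and] at hp
      obtain ⟨⟨h1, h2, h3⟩, hg1, hg2⟩ := hp
      simp only [Finset.mem_coe, mem_filter, mem_univ, true_and]
      have hinjU : ∀ x ∈ U, ∀ y ∈ U, p.2 x = p.2 y → x = y := by
        intro x hx y hy hxy
        obtain ⟨i, hi, hxi⟩ := Finset.mem_biUnion.mp hx
        obtain ⟨j, hj, hyj⟩ := Finset.mem_biUnion.mp hy
        have hxmem : p.2 x ∈ Y i := (hg1 i hi) ▸ Finset.mem_image_of_mem _ hxi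
        have hymem : p.2 y ∈ Y j := (hg1 j hj) ▸ Finset.mem_image_of_mem _ hyj
        have hij : i = j := by
          by_contra hne
          exact (Finset.disjoint_left.mp (hY i j hne) hxmem) (hxy ▸ hymem)
        subst hij
        have : Set.InjOn p.2 ↑(X i) :=
          Finset.injOn_of_card_image_eq (by rw [hg1 i hi, hcard i])
        exact this hxi hyj hxy
      have hmemV : ∀ x ∈ U, p.2 x ∈ V := by
        intro x hx
        obtain ⟨i, hi, hxi⟩ := Finset.mem_biUnion.mp hx
        exact Finset.mem_biUnion.mpr ⟨i, hi, (hg1 i hi) ▸ Finset.mem_image_of_mem _ hxi⟩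
      constructor
      · intro x y hxy
        by_cases hx : x ∈ U <;> by_cases hy : y ∈ U
        · simp only [if_pos hx, if_pos hy] at hxy
          exact hinjU x hx y hy hxy
        · simp only [if_pos hx, if_neg hy] at hxy
          exact absurd (hxy ▸ hmemV x hx) (h2 y hy)
        · simp only [if_neg hx, if_pos hy] at hxy
          exact absurd (hxy ▸ hmemV y hy) (h2 x hx)
        · simp only [if_neg hx, if_neg hy] at hxy
          exact h1 x hx y hy hxy
      · intro i hi
        rw [show Finset.image (fun x => if x ∈ U then p.2 x else p.1 x) (X i)
            = Finset.image p.2 (X i) from Finset.image_congr fun x hx =>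
              if_pos (Finset.mem_biUnion.mpr ⟨i, hi, hx⟩)]
        exact hg1 i hi
    · intro f hf
      funext x
      by_cases hx : x ∈ U
      · simp only [if_pos hx]
      · simp only [if_neg hx]
    · intro p hp
      simp only [Finset.mem_coe, Finset.mem_product, mem_filter, mem_univ, true_and] at hp
      refine Prod.ext ?_ ?_
      · funext x
        by_cases hx : x ∈ U
        · simp only [if_pos hx]
          exact (hp.1.2.2 x hx).symm
        · simp only [if_neg hx]
      · funext x
        by_cases hx : x ∈ U
        · simp only [if_pos hx]
        · simp only [if_neg hx]
          exact (hp.2.2 x hx).symm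
  rw [key, Finset.card_product, aux_compl U V hUV, aux_blocks X Y hX hcard I]

/-- **Theorem 3.** Let `X 1, …, X k` be pairwise disjoint blocks in `[m]` and
`Y 1, …, Y k` pairwise disjoint blocks in `[n]` with `|X i| = |Y i|`. The number of
injections `f : [m] → [n]` with `f(X i) ≠ Y i` for every `i` equals
`∑_{I ⊆ [k]} (−1)^{|I|} (n − |⋃_{i∈I} X i|)^{(m − |⋃_{i∈I} X i|)} ∏_{i∈I} |X i|!`,
where `a^{(b)}` is the falling factorial. -/
theorem stmt_7 (m n k : ℕ) (hm : 0 < m) (hk : 0 < k) (hmn : m ≤ n)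
    (X : Fin k → Finset (Fin m)) (Y : Fin k → Finset (Fin n))
    (hX : ∀ i j, i ≠ j → Disjoint (X i) (X j))
    (hY : ∀ i j, i ≠ j → Disjoint (Y i) (Y j))
    (hcard : ∀ i, (X i).card = (Y i).card) :
    ((Finset.univ.filter
        (fun f : Fin m → Fin n =>
          Function.Injective f ∧ ∀ i, (X i).image f ≠ Y i)).card : ℤ) =
      ∑ I : Finset (Fin k),
        (-1) ^ I.card *
          ((n - (I.biUnion X).card).descFactorial (m - (I.biUnion X).card) : ℤ) *
          ∏ i ∈ I, (Nat.factorial (X i).card : ℤ) := by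
  haveI : NeZero n := ⟨by omega⟩
  classical
  set S : Finset (Fin m → Fin n) :=
    univ.filter (fun f : Fin m → Fin n => Function.Injective f) with hS
  have h2 : ∀ (q : (Fin m → Fin n) → Prop) (_ : DecidablePred q) (c : ℤ),
      (∑ f ∈ S, if q f then c else 0) = ((S.filter q).card : ℤ) * c := by
    intro q _ c
    rw [← Finset.sum_filter, Finset.sum_const, nsmul_eq_mul]
  have h1 : (univ.filter (fun f : Fin m → Fin n =>
      Function.Injective f ∧ ∀ i, (X i).image f ≠ Y i))
      = S.filter (fun f => ∀ i, (X i).image f ≠ Y i) := by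
    rw [hS, Finset.filter_filter]
  have e3 : ∀ (t : Finset (Fin k)) (f : Fin m → Fin n),
      (∏ i ∈ t, (if (X i).image f = Y i then (-1 : ℤ) else 0))
        = if (∀ i ∈ t, (X i).image f = Y i) then (-1 : ℤ) ^ t.card else 0 := by
    intro t f
    by_cases h : ∀ i ∈ t, (X i).image f = Y i
    · rw [if_pos h, Finset.prod_congr rfl fun i hi => if_pos (h i hi), Finset.prod_const]
    · rw [if_neg h]
      push_neg at h
      obtain ⟨i, hi, hne⟩ := h
      exact Finset.prod_eq_zero hi (if_neg hne)
  calc ((univ.filter (fun f : Fin m → Fin n =>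
          Function.Injective f ∧ ∀ i, (X i).image f ≠ Y i)).card : ℤ)
      = ∑ f ∈ S, if (∀ i, (X i).image f ≠ Y i) then (1 : ℤ) else 0 := by
        rw [h1, h2 _ inferInstance 1, mul_one]
    _ = ∑ f ∈ S, ∏ i : Fin k, ((if (X i).image f = Y i then (-1 : ℤ) else 0) + 1) := by
        refine Finset.sum_congr rfl fun f _ => ?_
        by_cases hf : ∀ i, (X i).image f ≠ Y i
        · rw [if_pos hf]
          refine (Finset.prod_eq_one fun i _ => ?_).symm
          rw [if_neg (hf i)]; ring
        · rw [if_neg hf]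
          push_neg at hf
          obtain ⟨i, hi⟩ := hf
          refine (Finset.prod_eq_zero (Finset.mem_univ i) ?_).symm
          rw [if_pos hi]; ring
    _ = ∑ f ∈ S, ∑ t ∈ (univ : Finset (Fin k)).powerset,
          ∏ i ∈ t, (if (X i).image f = Y i then (-1 : ℤ) else 0) := by
        refine Finset.sum_congr rfl fun f _ => ?_
        rw [Finset.prod_add]
        exact Finset.sum_congr rfl fun t _ => by rw [Finset.prod_const_one, mul_one]
    _ = ∑ t ∈ (univ : Finset (Fin k)).powerset, ∑ f ∈ S,
          ∏ i ∈ t, (if (X i).image f = Y i then (-1 : ℤ) else 0) := Finset.sum_comm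
    _ = ∑ t ∈ (univ : Finset (Fin k)).powerset,
          ((S.filter (fun f => ∀ i ∈ t, (X i).image f = Y i)).card : ℤ) * (-1) ^ t.card := by
        refine Finset.sum_congr rfl fun t _ => ?_
        rw [← h2 _ inferInstance ((-1 : ℤ) ^ t.card)]
        exact Finset.sum_congr rfl fun f _ => e3 t f
    _ = ∑ I : Finset (Fin k),
          (-1) ^ I.card *
            ((n - (I.biUnion X).card).descFactorial (m - (I.biUnion X).card) : ℤ) *
            ∏ i ∈ I, (Nat.factorial (X i).card : ℤ) := by
        rw [Finset.powerset_univ]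
        refine Finset.sum_congr rfl fun t _ => ?_
        rw [hS, Finset.filter_filter, aux_N X Y hX hY hcard t]
        push_cast
        ring
end

section
/- Let m ≤ n be positive integers and k ≤ m. Let x_1, …, x_k be distinct elements of [m] = {1, …, m} and y_1, …, y_k distinct elements of [n] = {1, …, n}. Then the number I_1(m, n, k) of injective functions f : [m] → [n] such that f(x_i) ≠ y_i for all i = 1, …, k satisfies I_1(m, n, k) = ∑_{i=0}^{k} (−1)^i · C(k, i) · (n−i)^{(m−i)}. -/
open Finset

lemma my_inf_filter {ι α : Type*} [DecidableEq α] [Fintype α] (t : Finset ι)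
    (p : ι → α → Prop) [∀ i, DecidablePred (p i)] :
    t.inf (fun i => univ.filter (p i)) = univ.filter (fun a => ∀ i ∈ t, p i a) := by
  classical
  induction t using Finset.induction with
  | empty => simp
  | insert _ _ h ih =>
      rw [Finset.inf_insert, ih]
      ext a
      simp [and_assoc]

lemma count_fixed {m n k : ℕ} (hk : 0 < k) {x : Fin k → Fin m} (hx : Function.Injective x)
    {y : Fin k → Fin n} (hy : Function.Injective y) (t : Finset (Fin k)) :
    #(univ.filter (fun f : Fin m → Fin n =>
        Function.Injective f ∧ ∀ i ∈ t, f (x i) = y i))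
      = (n - #t).descFactorial (m - #t) := by
  classical
  haveI : Nonempty (Fin k) := ⟨⟨0, hk⟩⟩
  have e : {f : Fin m → Fin n // Function.Injective f ∧ ∀ i ∈ t, f (x i) = y i} ≃
      ({a : Fin m // a ∉ t.image x} ↪ {b : Fin n // b ∉ t.image y}) := by
    refine ⟨fun f => ⟨fun a => ⟨f.1 a.1, ?_⟩, ?_⟩,
      fun g => ⟨fun a => if h : a ∈ t.image x then y (Function.invFun x a)
        else (g ⟨a, h⟩).1, ?_, ?_⟩, ?_, ?_⟩
    · intro hmem
      obtain ⟨i, hi, hyi⟩ := Finset.mem_image.1 hmem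
      have hfx : f.1 (x i) = f.1 a.1 := by rw [f.2.2 i hi, hyi]
      exact a.2 (Finset.mem_image.2 ⟨i, hi, f.2.1 hfx⟩)
    · intro a b hab
      exact Subtype.ext (f.2.1 (congrArg Subtype.val hab))
    · -- injectivity of the reconstructed function
      intro a b hab
      dsimp only at hab
      by_cases ha : a ∈ t.image x <;> by_cases hb : b ∈ t.image x
      · rw [dif_pos ha, dif_pos hb] at hab
        obtain ⟨i, hi, rfl⟩ := Finset.mem_image.1 ha
        obtain ⟨j, hj, rfl⟩ := Finset.mem_image.1 hb
        rw [Function.leftInverse_invFun hx, Function.leftInverse_invFun hx] at hab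
        exact congrArg x (hy hab)
      · rw [dif_pos ha, dif_neg hb] at hab
        obtain ⟨i, hi, rfl⟩ := Finset.mem_image.1 ha
        rw [Function.leftInverse_invFun hx] at hab
        exact absurd (Finset.mem_image.2 ⟨i, hi, hab⟩) (g ⟨b, hb⟩).2
      · rw [dif_neg ha, dif_pos hb] at hab
        obtain ⟨i, hi, rfl⟩ := Finset.mem_image.1 hb
        rw [Function.leftInverse_invFun hx] at hab
        exact absurd (Finset.mem_image.2 ⟨i, hi, hab.symm⟩) (g ⟨a, ha⟩).2
      · rw [dif_neg ha, dif_neg hb] at hab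
        exact congrArg Subtype.val (g.injective (Subtype.ext hab))
    · -- the reconstructed function satisfies the constraints
      intro i hi
      dsimp only
      rw [dif_pos (Finset.mem_image.2 ⟨i, hi, rfl⟩), Function.leftInverse_invFun hx i]
    · -- left inverse
      intro f
      apply Subtype.ext
      funext a
      by_cases ha : a ∈ t.image x
      · obtain ⟨i, hi, rfl⟩ := Finset.mem_image.1 ha
        simp only [dif_pos ha, Function.leftInverse_invFun hx i]
        exact (f.2.2 i hi).symm
      · simp only [dif_neg ha]
        rfl
    · -- right inverse
      intro g
      ext a
      simp only [Function.Embedding.coeFn_mk]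
      show ((if h : a.1 ∈ t.image x then y (Function.invFun x a.1) else (g ⟨a.1, h⟩).1 : Fin n) : ℕ) = _
      rw [dif_neg a.2]
  have h1 : #(univ.filter (fun f : Fin m → Fin n =>
      Function.Injective f ∧ ∀ i ∈ t, f (x i) = y i))
      = Fintype.card {f : Fin m → Fin n // Function.Injective f ∧ ∀ i ∈ t, f (x i) = y i} :=
    (Fintype.card_subtype _).symm
  have hA : Fintype.card {a : Fin m // a ∉ t.image x} = m - #t := by
    rw [Fintype.card_subtype_compl, Fintype.card_fin, Fintype.card_coe,
      Finset.card_image_of_injective t hx]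
  have hB : Fintype.card {b : Fin n // b ∉ t.image y} = n - #t := by
    rw [Fintype.card_subtype_compl, Fintype.card_fin, Fintype.card_coe,
      Finset.card_image_of_injective t hy]
  rw [h1, Fintype.card_congr e, Fintype.card_embedding_eq, hA, hB]

/-- **Corollary 6.** For distinct `x 1, …, x k` in `[m]` and distinct `y 1, …, y k`
in `[n]`, the number of injections `f : [m] → [n]` with `f (x i) ≠ y i` for all `i`
equals `∑_{i=0}^{k} (−1)^i C(k,i) (n−i)^{(m−i)}`, where `a^{(b)}` is the falling
factorial. -/
theorem stmt_8 (m n k : ℕ) (hm : 0 < m) (hk : 0 < k) (hmn : m ≤ n) (hkm : k ≤ m)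
    (x : Fin k → Fin m) (hx : Function.Injective x)
    (y : Fin k → Fin n) (hy : Function.Injective y) :
    ((Finset.univ.filter
        (fun f : Fin m → Fin n =>
          Function.Injective f ∧ ∀ i, f (x i) ≠ y i)).card : ℤ) =
      ∑ i ∈ Finset.range (k + 1),
        (-1) ^ i * (k.choose i) * ((n - i).descFactorial (m - i) : ℤ) := by
  classical
  have key := Finset.inclusion_exclusion_sum_inf_compl (G := ℤ) (univ : Finset (Fin k))
    (fun i => univ.filter (fun f : Fin m → Fin n => f (x i) = y i))
    (fun f => if Function.Injective f then (1 : ℤ) else 0)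
  have hcompl : (univ.inf fun i : Fin k =>
      (univ.filter (fun f : Fin m → Fin n => f (x i) = y i))ᶜ)
      = univ.filter (fun f : Fin m → Fin n => ∀ i, f (x i) ≠ y i) := by
    have : ∀ i : Fin k, (univ.filter (fun f : Fin m → Fin n => f (x i) = y i))ᶜ
        = univ.filter (fun f : Fin m → Fin n => f (x i) ≠ y i) := by
      intro i; rw [Finset.compl_filter]
    simp only [this, my_inf_filter]
    simp
  have hLHS : ∑ f ∈ univ.filter (fun f : Fin m → Fin n => ∀ i, f (x i) ≠ y i),
      (if Function.Injective f then (1 : ℤ) else 0)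
      = ((univ.filter (fun f : Fin m → Fin n =>
          Function.Injective f ∧ ∀ i, f (x i) ≠ y i)).card : ℤ) := by
    rw [Finset.sum_boole, Finset.filter_filter]
    congr 2
    ext f
    simp only [Finset.mem_filter]
    tauto
  have hinner : ∀ t : Finset (Fin k),
      ∑ f ∈ t.inf (fun i => univ.filter (fun f : Fin m → Fin n => f (x i) = y i)),
        (if Function.Injective f then (1 : ℤ) else 0)
      = ((n - #t).descFactorial (m - #t) : ℤ) := by
    intro t
    rw [my_inf_filter, Finset.sum_boole, ← count_fixed hk hx hy t, Finset.filter_filter]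
    congr 2
    ext f
    simp only [Finset.mem_filter]
    tauto
  rw [hcompl, hLHS] at key
  rw [key]
  have := Finset.sum_powerset_apply_card
    (f := fun j => (-1 : ℤ) ^ j * ((n - j).descFactorial (m - j) : ℤ))
    (x := (univ : Finset (Fin k)))
  simp only [Finset.card_univ, Fintype.card_fin] at this
  calc ∑ t ∈ (univ : Finset (Fin k)).powerset, (-1 : ℤ) ^ #t •
        ∑ f ∈ t.inf (fun i => univ.filter (fun f : Fin m → Fin n => f (x i) = y i)),
          (if Function.Injective f then (1 : ℤ) else 0)
      = ∑ t ∈ (univ : Finset (Fin k)).powerset,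
          (-1 : ℤ) ^ #t * ((n - #t).descFactorial (m - #t) : ℤ) := by
        apply Finset.sum_congr rfl
        intro t _
        rw [hinner t, smul_eq_mul]
    _ = ∑ i ∈ Finset.range (k + 1),
          (k.choose i) • ((-1 : ℤ) ^ i * ((n - i).descFactorial (m - i) : ℤ)) := this
    _ = ∑ i ∈ Finset.range (k + 1),
        (-1) ^ i * (k.choose i) * ((n - i).descFactorial (m - i) : ℤ) := by
        apply Finset.sum_congr rfl
        intro i _
        rw [nsmul_eq_mul]
        ring
end
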